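/- Let d ≥ 1 be an integer, λ ≥ 1 a real, and f' : ℕ → ℝ a nonnegative function. Suppose that for every natural n and every natural m with m ≤ (n+1)^2, the inequality λ·m^{d+1} − m·f'(n+1) + n·f'(n) ≥ n^{d+1} holds. Then the same inequality holds for every natural n and every natural m (in particular for all m > (n+1)^2). -/

import Mathlib

lemma aux_pow_succ (a k : ℕ) : a ^ (k + 1) + a ^ k ≤ (a + 1) ^ (k + 1) := by
  calc a ^ (k + 1) + a ^ k = a ^ k * (a + 1) := by ring
    _ ≤ (a + 1) ^ k * (a + 1) := by
        exact Nat.mul_le_mul_right _ (Nat.pow_le_pow_left (Nat.le_succ a) k)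
    _ = (a + 1) ^ (k + 1) := by ring

lemma key_nat (d n m : ℕ) (hd : 1 ≤ d) (hm : (n + 1) ^ 2 < m) :
    m * (n + 1) ^ (d + 1) + n ^ (d + 1) ≤ m ^ (d + 1) := by
  obtain ⟨k, rfl⟩ : ∃ k, d = k + 1 := ⟨d - 1, by omega⟩
  have hmd : (n + 1) ^ (k + 2) + n ^ k ≤ m ^ (k + 1) := by
    calc (n + 1) ^ (k + 2) + n ^ k
        ≤ (n + 1) ^ (2 * (k + 1)) + (n + 1) ^ (2 * k) := by
          gcongr ?_ + ?_
          · exact Nat.pow_le_pow_right (by omega) (by omega)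
          · calc n ^ k ≤ (n + 1) ^ k := Nat.pow_le_pow_left (by omega) k
              _ ≤ (n + 1) ^ (2 * k) := Nat.pow_le_pow_right (by omega) (by omega)
      _ = ((n + 1) ^ 2) ^ (k + 1) + ((n + 1) ^ 2) ^ k := by
          rw [← pow_mul, ← pow_mul, Nat.mul_comm 2 (k+1), Nat.mul_comm 2 k]
      _ ≤ ((n + 1) ^ 2 + 1) ^ (k + 1) := aux_pow_succ _ _
      _ ≤ m ^ (k + 1) := Nat.pow_le_pow_left (by omega) _
  calc m * (n + 1) ^ (k + 2) + n ^ (k + 2)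
      ≤ m * (n + 1) ^ (k + 2) + m * n ^ k := by
        have h1 : n ^ (k + 2) = n ^ 2 * n ^ k := by ring
        have h2 : n ^ 2 ≤ m :=
          le_trans (Nat.pow_le_pow_left (by omega) 2) (le_of_lt hm)
        rw [h1]
        gcongr
    _ = m * ((n + 1) ^ (k + 2) + n ^ k) := by ring
    _ ≤ m * m ^ (k + 1) := Nat.mul_le_mul_left m hmd
    _ = m ^ (k + 2) := by ring

/-- If the per-resource `(lam, 0)`-smoothness condition with respect to the
social cost objective `h(n) = n^(d+1)` holds for all `m ≤ (n+1)^2`, then it holds for all `m`. -/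
theorem smoothness_bounded_m_social_cost
    (d : ℕ) (hd : 1 ≤ d) (lam : ℝ) (hlam : 1 ≤ lam)
    (f' : ℕ → ℝ) (hf'nonneg : ∀ n, 0 ≤ f' n)
    (hsmooth : ∀ n m : ℕ, m ≤ (n + 1) ^ 2 →
      lam * (m : ℝ) ^ (d + 1) - (m : ℝ) * f' (n + 1) + (n : ℝ) * f' n
        ≥ (n : ℝ) ^ (d + 1)) :
    ∀ n m : ℕ,
      lam * (m : ℝ) ^ (d + 1) - (m : ℝ) * f' (n + 1) + (n : ℝ) * f' n
        ≥ (n : ℝ) ^ (d + 1) := by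
  -- bound on f'
  have hbound : ∀ n : ℕ, f' (n + 1) ≤ lam * ((n : ℝ) + 1) ^ (d + 1) := by
    intro n
    induction n with
    | zero =>
      have h := hsmooth 0 1 (by norm_num)
      push_cast at h ⊢
      simp [zero_pow (Nat.succ_ne_zero d)] at h ⊢
      linarith
    | succ n ih =>
      have h := hsmooth (n + 1) (n + 2) (by nlinarith)
      have hpow : ((n : ℝ) + 1 + 1) ≤ ((n : ℝ) + 1) ^ 2 + 1 := by nlinarith
      push_cast at h
      -- (n+2) * f'(n+2) ≤ lam*(n+2)^(d+1) + (n+1)*f'(n+1)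
      have h1 : ((n : ℝ) + 2) * f' (n + 2)
          ≤ lam * ((n : ℝ) + 2) ^ (d + 1) + ((n : ℝ) + 1) * f' (n + 1) := by
        nlinarith [pow_nonneg (by positivity : (0:ℝ) ≤ (n:ℝ) + 1) (d + 1)]
      have h2 : ((n : ℝ) + 1) * f' (n + 1) ≤ lam * ((n : ℝ) + 1) ^ (d + 2) := by
        calc ((n : ℝ) + 1) * f' (n + 1)
            ≤ ((n : ℝ) + 1) * (lam * ((n : ℝ) + 1) ^ (d + 1)) := by
              have : (0:ℝ) ≤ (n : ℝ) + 1 := by positivity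
              exact mul_le_mul_of_nonneg_left ih this
          _ = lam * ((n : ℝ) + 1) ^ (d + 2) := by ring
      have h3 : lam * ((n : ℝ) + 1) ^ (d + 2) ≤ lam * ((n : ℝ) + 1) * ((n : ℝ) + 2) ^ (d + 1) := by
        have hle : ((n : ℝ) + 1) ^ (d + 1) ≤ ((n : ℝ) + 2) ^ (d + 1) :=
          pow_le_pow_left₀ (by positivity) (by linarith) _
        have hl : (0:ℝ) ≤ lam * ((n : ℝ) + 1) := by
          have : (0:ℝ) ≤ lam := by linarith
          positivity
        calc lam * ((n : ℝ) + 1) ^ (d + 2)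
            = lam * ((n : ℝ) + 1) * ((n : ℝ) + 1) ^ (d + 1) := by ring
          _ ≤ lam * ((n : ℝ) + 1) * ((n : ℝ) + 2) ^ (d + 1) :=
              mul_le_mul_of_nonneg_left hle hl
      -- combine: (n+2) f'(n+2) ≤ lam*(n+2)^(d+1) + lam*(n+1)*(n+2)^(d+1) = lam*(n+2)^(d+2)
      have h4 : ((n : ℝ) + 2) * f' (n + 2) ≤ lam * ((n : ℝ) + 2) ^ (d + 2) := by
        have : lam * ((n : ℝ) + 2) ^ (d + 1) + lam * ((n : ℝ) + 1) * ((n : ℝ) + 2) ^ (d + 1)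
            = lam * ((n : ℝ) + 2) ^ (d + 2) := by ring
        linarith
      have hpos : (0:ℝ) < (n : ℝ) + 2 := by positivity
      have h5 : f' (n + 2) ≤ lam * ((n : ℝ) + 2) ^ (d + 1) := by
        have h6 : ((n : ℝ) + 2) * f' (n + 2) ≤ ((n : ℝ) + 2) * (lam * ((n : ℝ) + 2) ^ (d + 1)) := by
          nlinarith
        exact (mul_le_mul_iff_right₀ hpos).mp h6
      push_cast
      have e : ((n : ℝ) + 1 + 1) = (n : ℝ) + 2 := by ring
      rw [e]
      exact h5
  intro n m
  by_cases hm : m ≤ (n + 1) ^ 2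
  · exact hsmooth n m hm
  · push_neg at hm
    have hkey := key_nat d n m hd hm
    have hkeyR : (m : ℝ) * ((n : ℝ) + 1) ^ (d + 1) + (n : ℝ) ^ (d + 1) ≤ (m : ℝ) ^ (d + 1) := by
      exact_mod_cast hkey
    have hfb := hbound n
    have hmn : (0:ℝ) ≤ (m : ℝ) := by positivity
    have hnf : (0:ℝ) ≤ (n : ℝ) * f' n := mul_nonneg (by positivity) (hf'nonneg n)
    have hl : (0:ℝ) ≤ lam := by linarith
    have h1 : (m : ℝ) * f' (n + 1) ≤ (m : ℝ) * (lam * ((n : ℝ) + 1) ^ (d + 1)) :=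
      mul_le_mul_of_nonneg_left hfb hmn
    have h2 : lam * ((m : ℝ) * ((n : ℝ) + 1) ^ (d + 1) + (n : ℝ) ^ (d + 1))
        ≤ lam * (m : ℝ) ^ (d + 1) := mul_le_mul_of_nonneg_left hkeyR hl
    have hn1 : (n : ℝ) ^ (d + 1) ≤ lam * (n : ℝ) ^ (d + 1) := by
      nlinarith [pow_nonneg (by positivity : (0:ℝ) ≤ (n:ℝ)) (d + 1)]
    nlinarith
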